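/- arXiv:1006.1358 — 4 statements merged into one kernel-verified Lean document; each statement's English description precedes it below -/
import Mathlib

section
/- For positive semidefinite matrices A and B, the equality ‖A − B‖₁ = Tr(A) + Tr(B) holds if and only if A and B have orthogonal supports (i.e., AB = 0). -/
open Matrix
open scoped ComplexOrder

/-- The square root of a positive semidefinite matrix, with its meaning in the older Mathlib
(`Matrix.PosSemidef.sqrt`, since removed). -/
noncomputable def Matrix.PosSemidef.sqrt {𝕜 : Type*} [RCLike 𝕜] {m : Type*} [Fintype m]
    [DecidableEq m] {A : Matrix m m 𝕜} (hA : A.PosSemidef) : Matrix m m 𝕜 :=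
  (hA.1.eigenvectorUnitary : Matrix m m 𝕜) * diagonal ((↑) ∘ (√·) ∘ hA.1.eigenvalues) *
    (star (hA.1.eigenvectorUnitary : Matrix m m 𝕜))

/-- The trace norm `‖A‖₁ = Tr √(Aᴴ A)` of a complex matrix. -/
noncomputable def traceNorm {n : ℕ} (A : Matrix (Fin n) (Fin n) ℂ) : ℝ :=
  ((Matrix.posSemidef_conjTranspose_mul_self A).sqrt.trace).re

open scoped MatrixOrder in
lemma aux_sqrt_eq_cfc {n : ℕ} {A : Matrix (Fin n) (Fin n) ℂ} (hA : A.PosSemidef) :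
    hA.sqrt = CFC.sqrt A := by
  rw [CFC.sqrt_eq_cfc, cfc_nnreal_eq_real _ A, hA.1.cfc_eq]
  simp only [IsHermitian.cfc, Unitary.conjStarAlgAut_apply, Matrix.PosSemidef.sqrt]
  congr 3
  funext i
  simp [hA.eigenvalues_nonneg i]

open scoped MatrixOrder in
lemma Matrix.PosSemidef.sqrt_mul_self {n : ℕ} {A : Matrix (Fin n) (Fin n) ℂ}
    (hA : A.PosSemidef) : hA.sqrt * hA.sqrt = A := by
  rw [aux_sqrt_eq_cfc]
  exact CFC.sqrt_mul_sqrt_self A hA.nonneg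

open scoped MatrixOrder in
lemma Matrix.PosSemidef.posSemidef_sqrt {n : ℕ} {A : Matrix (Fin n) (Fin n) ℂ}
    (hA : A.PosSemidef) : hA.sqrt.PosSemidef := by
  rw [aux_sqrt_eq_cfc]
  exact Matrix.nonneg_iff_posSemidef.mp (CFC.sqrt_nonneg A)

open scoped MatrixOrder in
lemma Matrix.PosSemidef.eq_sqrt_of_sq_eq {n : ℕ} {A : Matrix (Fin n) (Fin n) ℂ}
    (hA : A.PosSemidef) {B : Matrix (Fin n) (Fin n) ℂ} (hB : B.PosSemidef) (h : A ^ 2 = B) :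
    A = hB.sqrt := by
  rw [aux_sqrt_eq_cfc]
  exact (CFC.sqrt_unique (by rw [← sq]; exact h) hA.nonneg).symm

lemma aux_exists_eq_conjTranspose_mul_self {n : ℕ} {C : Matrix (Fin n) (Fin n) ℂ}
    (hC : C.PosSemidef) : ∃ D : Matrix (Fin n) (Fin n) ℂ, C = Dᴴ * D :=
  ⟨hC.sqrt, by rw [hC.posSemidef_sqrt.1.eq, hC.sqrt_mul_self]⟩

section Aux

variable {n : ℕ}

lemma aux_re_trace_eq {D : Matrix (Fin n) (Fin n) ℂ} :
    ((Dᴴ * D).trace).re = ∑ j, ∑ i, Complex.normSq (D i j) := by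
  simp only [Matrix.trace, Matrix.diag, Matrix.mul_apply, Matrix.conjTranspose_apply,
    Complex.re_sum]
  congr 1; funext j; congr 1; funext i
  rw [Complex.star_def, ← Complex.normSq_eq_conj_mul_self, Complex.ofReal_re]

lemma aux_re_trace_nonneg {C : Matrix (Fin n) (Fin n) ℂ} (hC : C.PosSemidef) :
    0 ≤ (C.trace).re := by
  obtain ⟨D, rfl⟩ := aux_exists_eq_conjTranspose_mul_self hC
  rw [aux_re_trace_eq]
  exact Finset.sum_nonneg fun j _ => Finset.sum_nonneg fun i _ => Complex.normSq_nonneg _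

lemma aux_eq_zero_of_re_trace_eq_zero {C : Matrix (Fin n) (Fin n) ℂ} (hC : C.PosSemidef)
    (h : (C.trace).re = 0) : C = 0 := by
  obtain ⟨D, rfl⟩ := aux_exists_eq_conjTranspose_mul_self hC
  rw [aux_re_trace_eq] at h
  have hD : D = 0 := by
    ext i j
    have h1 : ∀ j ∈ Finset.univ (α := Fin n), (0:ℝ) ≤ ∑ i, Complex.normSq (D i j) :=
      fun j _ => Finset.sum_nonneg fun i _ => Complex.normSq_nonneg _
    have h2 := (Finset.sum_eq_zero_iff_of_nonneg h1).mp h j (Finset.mem_univ j)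
    have h3 := (Finset.sum_eq_zero_iff_of_nonneg
      (fun i _ => Complex.normSq_nonneg (D i j))).mp h2 i (Finset.mem_univ i)
    simpa using (Complex.normSq_eq_zero).mp h3
  simp [hD]

lemma aux_conj_mul {V : Matrix (Fin n) (Fin n) ℂ} (hV : Vᴴ * V = 1)
    (d e : Fin n → ℂ) :
    (V * diagonal d * Vᴴ) * (V * diagonal e * Vᴴ) =
      V * diagonal (fun i => d i * e i) * Vᴴ := by
  have : (V * diagonal d * Vᴴ) * (V * diagonal e * Vᴴ)
      = V * (diagonal d * (Vᴴ * V) * diagonal e) * Vᴴ := by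
    simp only [Matrix.mul_assoc]
  rw [this, hV, Matrix.mul_one, Matrix.diagonal_mul_diagonal]

lemma aux_conj_trace {V : Matrix (Fin n) (Fin n) ℂ} (hV : Vᴴ * V = 1)
    (d : Fin n → ℂ) :
    (V * diagonal d * Vᴴ).trace = ∑ i, d i := by
  rw [Matrix.trace_mul_comm, ← Matrix.mul_assoc, hV, Matrix.one_mul, Matrix.trace_diagonal]


noncomputable def auxPhi {n : ℕ} (V : Matrix (Fin n) (Fin n) ℂ) (μ : Fin n → ℝ)
    (f : ℝ → ℝ) : Matrix (Fin n) (Fin n) ℂ :=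
  V * Matrix.diagonal (fun i => ((f (μ i) : ℝ) : ℂ)) * Vᴴ

lemma auxPhi_mul {n : ℕ} {V : Matrix (Fin n) (Fin n) ℂ} (hV : Vᴴ * V = 1)
    (μ : Fin n → ℝ) (f g : ℝ → ℝ) :
    auxPhi V μ f * auxPhi V μ g = auxPhi V μ (fun t => f t * g t) := by
  unfold auxPhi
  rw [aux_conj_mul hV]
  have : (fun i => ((f (μ i) : ℝ) : ℂ) * ((g (μ i) : ℝ) : ℂ))
      = fun i => (((f (μ i) * g (μ i) : ℝ)) : ℂ) := by
    funext i; push_cast; ring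
  rw [this]

lemma auxPhi_trace {n : ℕ} {V : Matrix (Fin n) (Fin n) ℂ} (hV : Vᴴ * V = 1)
    (μ : Fin n → ℝ) (f : ℝ → ℝ) :
    (auxPhi V μ f).trace = ∑ i, ((f (μ i) : ℝ) : ℂ) :=
  aux_conj_trace hV _

lemma auxPhi_re_trace {n : ℕ} {V : Matrix (Fin n) (Fin n) ℂ} (hV : Vᴴ * V = 1)
    (μ : Fin n → ℝ) (f : ℝ → ℝ) :
    ((auxPhi V μ f).trace).re = ∑ i, f (μ i) := by
  rw [auxPhi_trace hV, Complex.re_sum]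
  simp

lemma auxPhi_psd {n : ℕ} (V : Matrix (Fin n) (Fin n) ℂ) (μ : Fin n → ℝ)
    {f : ℝ → ℝ} (hf : ∀ t, 0 ≤ f t) : (auxPhi V μ f).PosSemidef := by
  have hd : (Matrix.diagonal (fun i => ((f (μ i) : ℝ) : ℂ))).PosSemidef :=
    Matrix.posSemidef_diagonal_iff.mpr fun i => by
      rw [Complex.zero_le_real]; exact hf _
  exact hd.mul_mul_conjTranspose_same V

end Aux

/-- For PSD matrices `A`, `B`, `‖A − B‖₁ = Tr A + Tr B` iff `A` and `B` have
orthogonal supports, i.e. `A * B = 0`. -/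
theorem traceNorm_sub_eq_sum_traces_iff_orthogonal {n : ℕ}
    (A B : Matrix (Fin n) (Fin n) ℂ)
    (hA : A.PosSemidef) (hB : B.PosSemidef) :
    traceNorm (A - B) = (A.trace).re + (B.trace).re ↔ A * B = 0 := by
  have hM : (A - B).IsHermitian := hA.1.sub hB.1
  set V : Matrix (Fin n) (Fin n) ℂ := (hM.eigenvectorUnitary : Matrix (Fin n) (Fin n) ℂ)
    with hVdef
  have hV : Vᴴ * V = 1 := by
    rw [← Matrix.star_eq_conjTranspose]
    exact Matrix.mem_unitaryGroup_iff'.mp hM.eigenvectorUnitary.2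
  set μ : Fin n → ℝ := hM.eigenvalues with hμdef
  have hspec : A - B = auxPhi V μ (fun t => t) := by
    have := hM.spectral_theorem
    rw [this]
    rfl
  -- the absolute-value function gives the square root of (A-B)ᴴ(A-B)
  have habs : auxPhi V μ (fun t => |t|) =
      (Matrix.posSemidef_conjTranspose_mul_self (A - B)).sqrt := by
    apply Matrix.PosSemidef.eq_sqrt_of_sq_eq (auxPhi_psd V μ fun t => abs_nonneg t)
    have e2 : (A - B)ᴴ * (A - B) = auxPhi V μ (fun t => t * t) := by
      rw [hM.eq, hspec]
      exact auxPhi_mul hV μ _ _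
    have hfun : (fun t : ℝ => |t| * |t|) = fun t : ℝ => t * t :=
      funext fun t => abs_mul_abs_self t
    rw [pow_two, auxPhi_mul hV, hfun, e2]
  have htn : traceNorm (A - B) = ∑ i, |μ i| := by
    rw [traceNorm, ← habs, auxPhi_re_trace hV]
  have htrsub : ((A - B).trace).re = (A.trace).re - (B.trace).re := by
    rw [Matrix.trace_sub, Complex.sub_re]
  have htrM : ((A - B).trace).re = ∑ i, μ i := by
    rw [hspec, auxPhi_re_trace hV]
  constructor
  · -- forward direction
    intro h
    rw [htn] at h
    -- projection onto the positive part
    set q : ℝ → ℝ := fun t => if 0 < t then 1 else 0 with hqdef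
    have hq0 : ∀ t, 0 ≤ q t := by
      intro t
      rw [hqdef]
      dsimp only
      split <;> norm_num
    set Q : Matrix (Fin n) (Fin n) ℂ := auxPhi V μ q with hQdef
    have hQpsd : Q.PosSemidef := auxPhi_psd V μ hq0
    have hQherm : Qᴴ = Q := hQpsd.1
    have hQQ : Q * Q = Q := by
      have hfun : (fun t => q t * q t) = q := by
        funext t
        rw [hqdef]
        dsimp only
        split <;> simp
      rw [hQdef, auxPhi_mul hV, hfun]
    have hQMQ : Q * (A - B) * Q = auxPhi V μ (fun t => max t 0) := by
      have hfun : (fun t => q t * (t * q t)) = fun t : ℝ => max t 0 := by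
        funext t
        rw [hqdef]
        dsimp only
        split <;> rename_i ht
        · rw [max_eq_left ht.le]; ring
        · rw [max_eq_right (not_lt.mp ht)]; ring
      rw [hQdef, hspec, Matrix.mul_assoc, auxPhi_mul hV, auxPhi_mul hV, hfun]
    -- trace of the positive part equals Re Tr A
    have hsum_max : ∑ i, max (μ i) 0 = (A.trace).re := by
      have hr : ∀ t : ℝ, max t 0 = (|t| + t) / 2 := by
        intro t
        rcases le_total 0 t with ht | ht
        · rw [max_eq_left ht, abs_of_nonneg ht]; ring
        · rw [max_eq_right ht, abs_of_nonpos ht]; ring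
      have h2 : ∑ i, μ i = (A.trace).re - (B.trace).re := by rw [← htrM, htrsub]
      calc ∑ i, max (μ i) 0 = ∑ i, (|μ i| + μ i) / 2 := by simp_rw [hr]
        _ = ((∑ i, |μ i|) + ∑ i, μ i) / 2 := by
            rw [← Finset.sum_add_distrib, Finset.sum_div]
        _ = (A.trace).re := by rw [h, h2]; ring
    have hP : Q * (A - B) * Q = Q * A * Q - Q * B * Q := by
      rw [Matrix.mul_sub, Matrix.sub_mul]
    have hXpsd : (Q * A * Q).PosSemidef := by
      have := hA.mul_mul_conjTranspose_same Q
      rwa [hQherm] at this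
    have hYpsd : (Q * B * Q).PosSemidef := by
      have := hB.mul_mul_conjTranspose_same Q
      rwa [hQherm] at this
    have hQ' : ((1 - Q) * (1 - Q) : Matrix (Fin n) (Fin n) ℂ) = 1 - Q := by
      rw [Matrix.mul_sub, Matrix.sub_mul, Matrix.sub_mul, hQQ, Matrix.mul_one, Matrix.one_mul,
        Matrix.mul_one]
      abel
    have hZpsd : ((1 - Q) * A * (1 - Q)).PosSemidef := by
      have h1 : (1 - Q)ᴴ = 1 - Q := by
        rw [Matrix.conjTranspose_sub, hQherm, Matrix.conjTranspose_one]
      have := hA.mul_mul_conjTranspose_same (1 - Q)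
      rwa [h1] at this
    -- trace accounting
    have htrX : (Q * A * Q).trace = (Q * A).trace := by
      rw [Matrix.trace_mul_comm, ← Matrix.mul_assoc, hQQ]
    have htrZ : ((1 - Q) * A * (1 - Q)).trace = A.trace - (Q * A).trace := by
      rw [Matrix.trace_mul_comm, ← Matrix.mul_assoc, hQ', Matrix.sub_mul, Matrix.one_mul,
        Matrix.trace_sub]
    have htrP : ((Q * (A - B) * Q).trace).re = ∑ i, max (μ i) 0 := by
      rw [hQMQ, auxPhi_re_trace hV]
    have key : ((Q * B * Q).trace).re = 0 ∧ (((1 - Q) * A * (1 - Q)).trace).re = 0 := by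
      have e1 : ((Q * (A - B) * Q).trace).re
          = ((Q * A * Q).trace).re - ((Q * B * Q).trace).re := by
        rw [hP, Matrix.trace_sub, Complex.sub_re]
      have e2 : ((Q * A * Q).trace).re + (((1 - Q) * A * (1 - Q)).trace).re
          = (A.trace).re := by
        rw [htrX, htrZ, Complex.sub_re]
        ring
      have e3 := htrP.trans hsum_max
      have n1 := aux_re_trace_nonneg hYpsd
      have n2 := aux_re_trace_nonneg hZpsd
      constructor <;> linarith [e1, e2, e3]
    have hY0 : Q * B * Q = 0 := aux_eq_zero_of_re_trace_eq_zero hYpsd key.1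
    have hZ0 : (1 - Q) * A * (1 - Q) = 0 := aux_eq_zero_of_re_trace_eq_zero hZpsd key.2
    -- deduce B Q = 0 and A (1 - Q) = 0
    have hBQ : B * Q = 0 := by
      set s := hB.sqrt with hsdef
      have hs2 : s * s = B := hB.sqrt_mul_self
      have hsherm : sᴴ = s := hB.posSemidef_sqrt.1
      have h0 : (s * Q)ᴴ * (s * Q) = 0 := by
        rw [Matrix.conjTranspose_mul, hsherm, hQherm, Matrix.mul_assoc, ← Matrix.mul_assoc s s Q,
          hs2, ← Matrix.mul_assoc]
        exact hY0
      have hz := Matrix.conjTranspose_mul_self_eq_zero.mp h0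
      calc B * Q = s * (s * Q) := by rw [← Matrix.mul_assoc, hs2]
        _ = 0 := by rw [hz, Matrix.mul_zero]
    have hAQ' : A * (1 - Q) = 0 := by
      set s := hA.sqrt with hsdef
      have hs2 : s * s = A := hA.sqrt_mul_self
      have hsherm : sᴴ = s := hA.posSemidef_sqrt.1
      have h1 : (1 - Q)ᴴ = 1 - Q := by
        rw [Matrix.conjTranspose_sub, hQherm, Matrix.conjTranspose_one]
      have h0 : (s * (1 - Q))ᴴ * (s * (1 - Q)) = 0 := by
        rw [Matrix.conjTranspose_mul, hsherm, h1, Matrix.mul_assoc,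
          ← Matrix.mul_assoc s s (1 - Q), hs2, ← Matrix.mul_assoc]
        exact hZ0
      have hz := Matrix.conjTranspose_mul_self_eq_zero.mp h0
      calc A * (1 - Q) = s * (s * (1 - Q)) := by rw [← Matrix.mul_assoc, hs2]
        _ = 0 := by rw [hz, Matrix.mul_zero]
    have hAeq : A = A * Q := by
      have hz : A * 1 - A * Q = 0 := by rw [← Matrix.mul_sub]; exact hAQ'
      rw [Matrix.mul_one] at hz
      linear_combination (norm := abel) hz
    have hQB : Q * B = 0 := by
      have hz : (B * Q)ᴴ = Q * B := by
        rw [Matrix.conjTranspose_mul, hQherm, hB.1.eq]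
      rw [← hz, hBQ, Matrix.conjTranspose_zero]
    rw [hAeq, Matrix.mul_assoc, hQB, Matrix.mul_zero]
  · -- backward direction
    intro h
    have hBA : B * A = 0 := by
      have hz : (A * B)ᴴ = B * A := by rw [Matrix.conjTranspose_mul, hA.1.eq, hB.1.eq]
      rw [← hz, h, Matrix.conjTranspose_zero]
    have hsq : (A + B) ^ 2 = (A - B)ᴴ * (A - B) := by
      rw [hM.eq, pow_two]
      rw [Matrix.add_mul, Matrix.mul_add, Matrix.mul_add, Matrix.sub_mul, Matrix.mul_sub,
        Matrix.mul_sub, h, hBA]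
      abel
    have hkey := Matrix.PosSemidef.eq_sqrt_of_sq_eq (hA.add hB)
      (Matrix.posSemidef_conjTranspose_mul_self (A - B)) hsq
    rw [traceNorm, ← hkey, Matrix.trace_add, Complex.add_re]
end

section
/- Let E be a trace-preserving completely positive map on M_n(ℂ), and let P₀ be the orthogonal projection onto the joint support of all fixed points of E. Then there exists a positive semidefinite fixed point ρ₀ of E whose support equals the range of P₀ (i.e., ρ₀ is full-rank on that subspace). -/
open Matrix
open scoped ComplexOrder

/-- A completely positive map on matrices (Kraus characterization). -/
def CompletelyPositive {n : ℕ}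
    (E : Matrix (Fin n) (Fin n) ℂ → Matrix (Fin n) (Fin n) ℂ) : Prop :=
  ∃ (k : ℕ) (K : Fin k → Matrix (Fin n) (Fin n) ℂ),
    ∀ X, E X = ∑ i, K i * X * (K i)ᴴ

/-- A trace-preserving map on matrices. -/
def TracePreserving {n : ℕ}
    (E : Matrix (Fin n) (Fin n) ℂ → Matrix (Fin n) (Fin n) ℂ) : Prop :=
  ∀ X, (E X).trace = X.trace

/-- The support (column space) of a matrix. -/
noncomputable def matSupp {n : ℕ} (X : Matrix (Fin n) (Fin n) ℂ) :
    Submodule ℂ (Fin n → ℂ) :=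
  LinearMap.range X.mulVecLin

namespace FRFS

variable {n : ℕ}

lemma psd_trace_nonneg {A : Matrix (Fin n) (Fin n) ℂ} (hA : A.PosSemidef) :
    0 ≤ A.trace := by
  refine Finset.sum_nonneg fun i _ => ?_
  have := hA.dotProduct_mulVec_nonneg (Pi.single i 1)
  simpa [Matrix.mulVec_single, dotProduct, Pi.single_apply, Finset.sum_ite_eq'] using this

lemma psd_trace_eq_zero {A : Matrix (Fin n) (Fin n) ℂ} (hA : A.PosSemidef)
    (h : A.trace = 0) : A = 0 := by
  obtain ⟨B, rfl⟩ : ∃ B : Matrix (Fin n) (Fin n) ℂ, A = Bᴴ * B := by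
    open scoped MatrixOrder in exact CStarAlgebra.nonneg_iff_eq_star_mul_self.mp hA.nonneg
  rw [Matrix.trace] at h
  have h2 : ∀ j ∈ (Finset.univ : Finset (Fin n)), (Bᴴ * B).diag j = 0 := by
    intro j hj
    refine (Finset.sum_eq_zero_iff_of_nonneg fun j _ => ?_).mp h j hj
    simp only [Matrix.diag, Matrix.mul_apply, Matrix.conjTranspose_apply]
    exact Finset.sum_nonneg fun i _ => star_mul_self_nonneg _
  clear h
  have hB : B = 0 := by
    ext i j
    have := h2 j (Finset.mem_univ j)
    simp only [Matrix.diag, Matrix.mul_apply, Matrix.conjTranspose_apply] at this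
    have := (Finset.sum_eq_zero_iff_of_nonneg fun i _ => star_mul_self_nonneg (B i j)).mp this i
      (Finset.mem_univ i)
    simpa [mul_eq_zero] using this
  rw [hB]; simp

lemma psd_sum {ι : Type*} (s : Finset ι) (f : ι → Matrix (Fin n) (Fin n) ℂ)
    (h : ∀ i ∈ s, (f i).PosSemidef) : (∑ i ∈ s, f i).PosSemidef := by
  classical
  induction s using Finset.induction with
  | empty => simpa using Matrix.PosSemidef.zero
  | insert _ _ hx ih =>
    rw [Finset.sum_insert hx]
    exact (h _ (Finset.mem_insert_self _ _)).add (ih fun i hi => h i (Finset.mem_insert_of_mem hi))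


variable {H : Matrix (Fin n) (Fin n) ℂ}

noncomputable def specFun (hH : H.IsHermitian) (f : ℝ → ℝ) : Matrix (Fin n) (Fin n) ℂ :=
  (hH.eigenvectorUnitary : Matrix (Fin n) (Fin n) ℂ) *
    diagonal (fun i => (f (hH.eigenvalues i) : ℂ)) *
    star (hH.eigenvectorUnitary : Matrix (Fin n) (Fin n) ℂ)

lemma specFun_mul (hH : H.IsHermitian) (f g : ℝ → ℝ) :
    specFun hH f * specFun hH g = specFun hH (fun x => f x * g x) := by
  have hU : (star (hH.eigenvectorUnitary : Matrix (Fin n) (Fin n) ℂ)) *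
      (hH.eigenvectorUnitary : Matrix (Fin n) (Fin n) ℂ) = 1 :=
    Matrix.mem_unitaryGroup_iff'.mp hH.eigenvectorUnitary.2
  simp only [specFun, Matrix.mul_assoc]
  rw [← Matrix.mul_assoc (star (hH.eigenvectorUnitary : Matrix (Fin n) (Fin n) ℂ)) _ _, hU,
    Matrix.one_mul, ← Matrix.mul_assoc (Matrix.diagonal _) (Matrix.diagonal _) _,
    Matrix.diagonal_mul_diagonal]
  push_cast
  ring_nf

lemma specFun_herm (hH : H.IsHermitian) (f : ℝ → ℝ) : (specFun hH f).IsHermitian := by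
  unfold Matrix.IsHermitian specFun
  simp only [Matrix.conjTranspose_mul, Matrix.star_eq_conjTranspose,
    Matrix.conjTranspose_conjTranspose, Matrix.diagonal_conjTranspose]
  rw [Matrix.mul_assoc]
  congr 2
  ext i j
  simp [Pi.star_def, Complex.star_def]

lemma specFun_psd (hH : H.IsHermitian) (f : ℝ → ℝ) (hf : ∀ x, 0 ≤ f x) :
    (specFun hH f).PosSemidef := by
  have hd : (Matrix.diagonal (fun i => (f (hH.eigenvalues i) : ℂ))).PosSemidef := by
    rw [Matrix.posSemidef_diagonal_iff]
    intro i
    simpa using Complex.real_le_real.mpr (hf _)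
  have := hd.mul_mul_conjTranspose_same (hH.eigenvectorUnitary : Matrix (Fin n) (Fin n) ℂ)
  simpa [specFun, Matrix.star_eq_conjTranspose] using this

lemma specFun_id (hH : H.IsHermitian) : specFun hH (fun x => x) = H := by
  conv_rhs => rw [hH.spectral_theorem]
  rfl

lemma specFun_sub (hH : H.IsHermitian) (f g : ℝ → ℝ) :
    specFun hH f - specFun hH g = specFun hH (fun x => f x - g x) := by
  simp only [specFun]
  rw [← Matrix.sub_mul, ← Matrix.mul_sub, Matrix.diagonal_sub]
  push_cast
  rfl

lemma specFun_zero (hH : H.IsHermitian) : specFun hH (fun _ => 0) = 0 := by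
  simp [specFun]

lemma specFun_one (hH : H.IsHermitian) : specFun hH (fun _ => 1) = 1 := by
  have hU : (hH.eigenvectorUnitary : Matrix (Fin n) (Fin n) ℂ) *
      (star (hH.eigenvectorUnitary : Matrix (Fin n) (Fin n) ℂ)) = 1 :=
    Matrix.mem_unitaryGroup_iff.mp hH.eigenvectorUnitary.2
  simp only [specFun, Complex.ofReal_one, Matrix.diagonal_one, Matrix.mul_one, hU]

lemma psd_mul_eq_zero {A R : Matrix (Fin n) (Fin n) ℂ} (hA : A.PosSemidef)
    (hR : Rᴴ = R) (h : R * A * R = 0) : A * R = 0 := by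
  obtain ⟨S, hs, hSS⟩ : ∃ S : Matrix (Fin n) (Fin n) ℂ, Sᴴ = S ∧ S * S = A := by
    open scoped MatrixOrder in
    exact ⟨CFC.sqrt A, (CFC.sqrt_nonneg A).isSelfAdjoint, CFC.sqrt_mul_sqrt_self A hA.nonneg⟩
  have key : (S * R)ᴴ * (S * R) = R * A * R := by
    rw [Matrix.conjTranspose_mul, hR, hs, Matrix.mul_assoc, ← Matrix.mul_assoc S,
      hSS, Matrix.mul_assoc]
  rw [← key, Matrix.conjTranspose_mul_self_eq_zero] at h
  calc A * R = S * (S * R) := by rw [← Matrix.mul_assoc, hSS]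
  _ = 0 := by rw [h, Matrix.mul_zero]

lemma proj_step {A Q : Matrix (Fin n) (Fin n) ℂ} (hA : A.PosSemidef)
    (hQ : Qᴴ = Q) (hQ2 : Q * Q = Q) (htr : A.trace ≤ (A * Q).trace) :
    A = Q * A * Q := by
  set R : Matrix (Fin n) (Fin n) ℂ := 1 - Q with hRdef
  have hR : Rᴴ = R := by simp [hRdef, hQ]
  have hR2 : R * R = R := by
    simp only [hRdef, Matrix.mul_sub, Matrix.sub_mul, Matrix.one_mul, Matrix.mul_one, hQ2]
    abel
  have hRAR : (R * A * R).PosSemidef := by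
    have := hA.conjTranspose_mul_mul_same R
    rwa [hR] at this
  have htr0 : (R * A * R).trace = 0 := by
    have h1 : (R * A * R).trace = (A * R).trace := by
      rw [Matrix.trace_mul_cycle, hR2, Matrix.trace_mul_comm]
    have h2 : (A * R).trace = A.trace - (A * Q).trace := by
      simp [hRdef, Matrix.mul_sub, Matrix.trace_sub]
    have hle : (R * A * R).trace ≤ 0 := by rw [h1, h2]; exact sub_nonpos.mpr htr
    exact le_antisymm hle (psd_trace_nonneg hRAR)
  have hzero : R * A * R = 0 := psd_trace_eq_zero hRAR htr0
  have hAR : A * R = 0 := psd_mul_eq_zero hA hR hzero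
  have hAQ : A = A * Q := by
    have : A * (1 - Q) = 0 := hAR
    rw [Matrix.mul_sub, Matrix.mul_one, sub_eq_zero] at this
    exact this
  have hQA : A = Q * A := by
    calc A = Aᴴ := hA.1.symm
    _ = (A * Q)ᴴ := by rw [← hAQ]
    _ = Qᴴ * Aᴴ := Matrix.conjTranspose_mul _ _
    _ = Q * A := by rw [hQ, hA.1]
  calc A = A * Q := hAQ
  _ = (Q * A) * Q := by rw [← hQA]

lemma exists_left_factor {A C : Matrix (Fin n) (Fin n) ℂ}
    (h : ∀ v, C *ᵥ v = 0 → A *ᵥ v = 0) : ∃ D : Matrix (Fin n) (Fin n) ℂ, A = D * C := by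
  classical
  set f := C.mulVecLin with hf
  obtain ⟨ri, hri⟩ := f.rangeRestrict.exists_rightInverse_of_surjective
    (LinearMap.range_eq_top.2 f.surjective_rangeRestrict)
  obtain ⟨q, hq⟩ := (LinearMap.range f).exists_isCompl
  let π := (LinearMap.range f).linearProjOfIsCompl q hq
  let D' := A.mulVecLin ∘ₗ (ri ∘ₗ π)
  have hcomp : ∀ v, D' (f v) = A.mulVecLin v := by
    intro v
    have h1 : π (f v) = ⟨f v, LinearMap.mem_range_self f v⟩ :=
      Submodule.linearProjOfIsCompl_apply_left hq ⟨f v, LinearMap.mem_range_self f v⟩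
    have h2 : f (ri ⟨f v, LinearMap.mem_range_self f v⟩) = f v := by
      have := congrArg Subtype.val
        (LinearMap.ext_iff.mp hri ⟨f v, LinearMap.mem_range_self f v⟩)
      simpa using this
    have h3 : A.mulVecLin (ri ⟨f v, LinearMap.mem_range_self f v⟩) = A.mulVecLin v := by
      have hker : C *ᵥ (ri ⟨f v, LinearMap.mem_range_self f v⟩ - v) = 0 := by
        have : f (ri ⟨f v, LinearMap.mem_range_self f v⟩ - v) = 0 := by
          rw [map_sub, h2, sub_self]
        simpa [hf] using this
      have := h _ hker
      rw [Matrix.mulVec_sub] at this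
      have := sub_eq_zero.mp this
      simpa [Matrix.mulVecLin_apply] using this
    simp only [D', LinearMap.comp_apply, h1, h3]
  refine ⟨LinearMap.toMatrix' D', ?_⟩
  have hAf : A.mulVecLin = D' ∘ₗ f := LinearMap.ext fun v => (hcomp v).symm
  have : LinearMap.toMatrix' A.mulVecLin = LinearMap.toMatrix' D' * C := by
    rw [hAf, LinearMap.toMatrix'_comp, hf]
    congr 1
    exact LinearMap.toMatrix'_toLin' C
  rw [← this]
  exact (LinearMap.toMatrix'_toLin' A).symm

lemma herm_matSupp_le {A C : Matrix (Fin n) (Fin n) ℂ} (hA : A.IsHermitian)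
    (hC : C.IsHermitian) (h : ∀ v, C *ᵥ v = 0 → A *ᵥ v = 0) :
    matSupp A ≤ matSupp C := by
  obtain ⟨D, hD⟩ := exists_left_factor h
  have hfac : A = C * Dᴴ := by
    calc A = Aᴴ := hA.symm
    _ = Cᴴ * Dᴴ := by rw [hD, Matrix.conjTranspose_mul]
    _ = C * Dᴴ := by rw [hC.eq]
  rintro x ⟨v, rfl⟩
  exact ⟨Dᴴ *ᵥ v, by simp [hfac, Matrix.mulVecLin_apply, Matrix.mulVec_mulVec]⟩

lemma psd_matSupp_le_add {A B : Matrix (Fin n) (Fin n) ℂ} (hA : A.PosSemidef)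
    (hB : B.PosSemidef) : matSupp A ≤ matSupp (A + B) := by
  refine herm_matSupp_le hA.1 (hA.add hB).1 fun v hv => ?_
  have h0 : star v ⬝ᵥ A *ᵥ v + star v ⬝ᵥ B *ᵥ v = 0 := by
    rw [← dotProduct_add, ← Matrix.add_mulVec, hv, dotProduct_zero]
  have hz : star v ⬝ᵥ A *ᵥ v = 0 := by
    have hle : star v ⬝ᵥ A *ᵥ v ≤ 0 := by
      have heq : star v ⬝ᵥ A *ᵥ v = -(star v ⬝ᵥ B *ᵥ v) := by linear_combination h0
      rw [heq]
      exact neg_nonpos.mpr (hB.dotProduct_mulVec_nonneg v)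
    exact le_antisymm hle (hA.dotProduct_mulVec_nonneg v)
  exact (hA.dotProduct_mulVec_zero_iff v).mp hz

lemma matSupp_add_le (A B : Matrix (Fin n) (Fin n) ℂ) :
    matSupp (A + B) ≤ matSupp A ⊔ matSupp B := by
  rintro x ⟨v, rfl⟩
  rw [Matrix.mulVecLin_apply, Matrix.add_mulVec]
  exact Submodule.add_mem_sup ⟨v, rfl⟩ ⟨v, rfl⟩

lemma matSupp_smul_le (c : ℂ) (A : Matrix (Fin n) (Fin n) ℂ) :
    matSupp (c • A) ≤ matSupp A := by
  rintro x ⟨v, rfl⟩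
  rw [Matrix.mulVecLin_apply, Matrix.smul_mulVec]
  exact Submodule.smul_mem _ c ⟨v, rfl⟩

lemma matSupp_sub_le (A B : Matrix (Fin n) (Fin n) ℂ) :
    matSupp (A - B) ≤ matSupp A ⊔ matSupp B := by
  rintro x ⟨v, rfl⟩
  rw [Matrix.mulVecLin_apply, Matrix.sub_mulVec]
  exact sub_mem (Submodule.mem_sup_left ⟨v, rfl⟩) (Submodule.mem_sup_right ⟨v, rfl⟩)


lemma cp_conjT (E : Module.End ℂ (Matrix (Fin n) (Fin n) ℂ))
    (hCP : CompletelyPositive ⇑E) (X : Matrix (Fin n) (Fin n) ℂ) :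
    E Xᴴ = (E X)ᴴ := by
  obtain ⟨k, K, hK⟩ := hCP
  rw [hK, hK, Matrix.conjTranspose_sum]
  refine Finset.sum_congr rfl fun i _ => ?_
  simp [Matrix.conjTranspose_mul, Matrix.mul_assoc]

lemma cp_psd (E : Module.End ℂ (Matrix (Fin n) (Fin n) ℂ))
    (hCP : CompletelyPositive ⇑E) {X : Matrix (Fin n) (Fin n) ℂ}
    (hX : X.PosSemidef) : (E X).PosSemidef := by
  obtain ⟨k, K, hK⟩ := hCP
  rw [hK]
  exact psd_sum _ _ fun i _ => hX.mul_mul_conjTranspose_same (K i)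

lemma herm_fix_decomp (E : Module.End ℂ (Matrix (Fin n) (Fin n) ℂ))
    (hCP : CompletelyPositive ⇑E) (hTP : TracePreserving ⇑E)
    {H : Matrix (Fin n) (Fin n) ℂ} (hH : H.IsHermitian) (hfix : E H = H) :
    ∃ P N : Matrix (Fin n) (Fin n) ℂ,
      P.PosSemidef ∧ N.PosSemidef ∧ E P = P ∧ E N = N ∧ H = P - N := by
  classical
  set P := specFun hH (fun x => max x 0) with hPdef
  set N := specFun hH (fun x => max (-x) 0) with hNdef
  set Q := specFun hH (fun x => if 0 < x then 1 else 0) with hQdef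
  set Q' := specFun hH (fun x => if x < 0 then 1 else 0) with hQ'def
  have smul : ∀ f g h : ℝ → ℝ, (∀ x, f x * g x = h x) →
      specFun hH f * specFun hH g = specFun hH h := by
    intro f g h hfg
    rw [specFun_mul]
    exact congrArg _ (funext hfg)
  have hPpsd : P.PosSemidef := specFun_psd hH _ fun x => le_max_right _ _
  have hNpsd : N.PosSemidef := specFun_psd hH _ fun x => le_max_right _ _
  have hPN : H = P - N := by
    rw [hPdef, hNdef, specFun_sub]
    rw [show (fun x => max x 0 - max (-x) 0) = fun x : ℝ => x from funext fun x => ?_,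
      specFun_id]
    rcases le_total 0 x with h | h
    · rw [max_eq_left h, max_eq_right (neg_nonpos.mpr h), sub_zero]
    · rw [max_eq_right h, max_eq_left (neg_nonneg.mpr h), zero_sub, neg_neg]
  have hQherm : Qᴴ = Q := specFun_herm hH _
  have hQ'herm : Q'ᴴ = Q' := specFun_herm hH _
  have hQ2 : Q * Q = Q := smul _ _ _ fun x => by split_ifs <;> simp
  have hQ'2 : Q' * Q' = Q' := smul _ _ _ fun x => by split_ifs <;> simp
  have hQP : Q * P = P := smul _ _ _ fun x => by
    by_cases h : 0 < x
    · simp [h]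
    · simp [h, max_eq_right (le_of_not_gt h)]
  have hPQ : P * Q = P := smul _ _ _ fun x => by
    by_cases h : 0 < x
    · simp [h]
    · simp [h, max_eq_right (le_of_not_gt h)]
  have hNQ : N * Q = 0 := by
    have := smul (fun x => max (-x) 0) (fun x => if 0 < x then 1 else 0) (fun _ => 0)
      (fun x => by
        by_cases h : 0 < x
        · simp [h, max_eq_right (neg_nonpos.mpr (le_of_lt h))]
        · simp [h])
    rw [this, specFun_zero]
  have hQ'N : N * Q' = N := smul _ _ _ fun x => by
    by_cases h : x < 0
    · simp [h]
    · simp [h, max_eq_right (neg_nonpos.mpr (le_of_not_gt h))]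
  have hPQ' : P * Q' = 0 := by
    have := smul (fun x => max x 0) (fun x => if x < 0 then 1 else 0) (fun _ => 0)
      (fun x => by
        by_cases h : x < 0
        · simp [h, max_eq_right (le_of_lt h)]
        · simp [h])
    rw [this, specFun_zero]
  have hQQ' : Q * Q' = 0 := by
    have := smul (fun x => if 0 < x then (1:ℝ) else 0) (fun x => if x < 0 then 1 else 0)
      (fun _ => 0) (fun x => by
        by_cases h : 0 < x
        · simp [h, asymm h]
        · simp [h])
    rw [this, specFun_zero]
  have hQ'Q : Q' * Q = 0 := by
    have := smul (fun x => if x < 0 then (1:ℝ) else 0) (fun x => if 0 < x then 1 else 0)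
      (fun _ => 0) (fun x => by
        by_cases h : x < 0
        · simp [h, asymm h]
        · simp [h])
    rw [this, specFun_zero]
  set A := E P with hAdef
  set B := E N with hBdef
  have hApsd : A.PosSemidef := cp_psd E hCP hPpsd
  have hBpsd : B.PosSemidef := cp_psd E hCP hNpsd
  have hAB : A = P - N + B := by
    have : A - B = P - N := by
      rw [hAdef, hBdef, ← map_sub, ← hPN, hfix, hPN]
    rw [← this]
    abel
  have htrA : A.trace = P.trace := hTP P
  have htrB : B.trace = N.trace := hTP N
  -- trace of B sandwiched by Q is nonneg
  have trsand : ∀ (M R : Matrix (Fin n) (Fin n) ℂ), M.PosSemidef → Rᴴ = R → R * R = R →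
      0 ≤ (M * R).trace := by
    intro M R hM hR hR2
    have hps : (R * M * R).PosSemidef := by
      have := hM.conjTranspose_mul_mul_same R
      rwa [hR] at this
    have : (R * M * R).trace = (M * R).trace := by
      rw [Matrix.trace_mul_cycle, hR2, Matrix.trace_mul_comm]
    rw [← this]
    exact psd_trace_nonneg hps
  have htrQ : A.trace ≤ (A * Q).trace := by
    have hAQ : A * Q = P + B * Q := by
      rw [hAB, Matrix.add_mul, Matrix.sub_mul, hPQ, hNQ, sub_zero]
    rw [hAQ, Matrix.trace_add, htrA]
    exact le_add_of_nonneg_right (trsand B Q hBpsd hQherm hQ2)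
  have hAQA : A = Q * A * Q := proj_step hApsd hQherm hQ2 htrQ
  have htrQ' : B.trace ≤ (B * Q').trace := by
    have hBQ' : B * Q' = N + A * Q' := by
      have hBA : B = N - P + A := by rw [hAB]; abel
      rw [hBA, Matrix.add_mul, Matrix.sub_mul, hQ'N, hPQ', sub_zero]
    rw [hBQ', Matrix.trace_add, htrB]
    exact le_add_of_nonneg_right (trsand A Q' hApsd hQ'herm hQ'2)
  have hBQB : B = Q' * B * Q' := proj_step hBpsd hQ'herm hQ'2 htrQ'
  have hQBQ : Q * B * Q = 0 := by
    rw [hBQB]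
    calc Q * (Q' * B * Q') * Q = Q * Q' * B * (Q' * Q) := by
          simp only [Matrix.mul_assoc]
    _ = 0 := by rw [hQQ', hQ'Q, Matrix.zero_mul, Matrix.mul_zero]
  have hQN : Q * N = 0 := by
    have := smul (fun x => if 0 < x then (1:ℝ) else 0) (fun x => max (-x) 0) (fun _ => 0)
      (fun x => by
        by_cases h : 0 < x
        · simp [h, max_eq_right (neg_nonpos.mpr (le_of_lt h))]
        · simp [h])
    rw [this, specFun_zero]
  have hEP : E P = P := by
    have hQAQ : Q * A * Q = P := by
      rw [hAB]
      have expand : Q * (P - N + B) * Q = Q * P * Q - Q * N * Q + Q * B * Q := by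
        simp only [Matrix.mul_add, Matrix.add_mul, Matrix.mul_sub, Matrix.sub_mul]
      rw [expand, hQBQ, add_zero, show Q * N * Q = 0 from by rw [show Q * N * Q = (Q * N) * Q from rfl, hQN, Matrix.zero_mul], sub_zero, hQP, hPQ]
    exact hAQA.trans hQAQ
  have hEN : E N = N := by
    have hNPH : N = P - H := by rw [hPN]; abel
    calc E N = E P - E H := by rw [hNPH, map_sub]
    _ = P - H := by rw [hEP, hfix]
    _ = N := hNPH.symm
  exact ⟨P, N, hPpsd, hNpsd, hEP, hEN, hPN⟩

end FRFS

open FRFS in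
/-- A CPTP map `E` has a PSD fixed point `ρ₀` whose support is exactly the
joint support of all fixed points of `E`. -/
theorem exists_full_rank_fixed_state {n : ℕ}
    (E : Module.End ℂ (Matrix (Fin n) (Fin n) ℂ))
    (hCP : CompletelyPositive (⇑E)) (hTP : TracePreserving (⇑E)) :
    ∃ ρ₀ : Matrix (Fin n) (Fin n) ℂ,
      ρ₀.PosSemidef ∧ E ρ₀ = ρ₀ ∧
      matSupp ρ₀ = ⨆ X ∈ {X : Matrix (Fin n) (Fin n) ℂ | E X = X}, matSupp X := by
  classical
  set S : Set (Matrix (Fin n) (Fin n) ℂ) := {ρ | ρ.PosSemidef ∧ E ρ = ρ} with hSdef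
  set ds : Set ℕ := (fun ρ => Module.finrank ℂ (matSupp ρ)) '' S with hdsdef
  have hne : ds.Nonempty := ⟨_, ⟨0, ⟨Matrix.PosSemidef.zero, map_zero E⟩, rfl⟩⟩
  have hbdd : BddAbove ds := by
    refine ⟨Module.finrank ℂ (Fin n → ℂ), ?_⟩
    rintro m ⟨ρ, _, rfl⟩
    exact Submodule.finrank_le _
  obtain ⟨ρ₀, hρ₀S, hρ₀rank⟩ := Nat.sSup_mem hne hbdd
  obtain ⟨hρ₀psd, hρ₀fix⟩ := hρ₀S
  -- maximality of the support of ρ₀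
  have key : ∀ σ : Matrix (Fin n) (Fin n) ℂ, σ.PosSemidef → E σ = σ →
      matSupp σ ≤ matSupp ρ₀ := by
    intro σ hσpsd hσfix
    have hτS : (ρ₀ + σ) ∈ S := ⟨hρ₀psd.add hσpsd, by rw [map_add, hρ₀fix, hσfix]⟩
    have hle : matSupp ρ₀ ≤ matSupp (ρ₀ + σ) := psd_matSupp_le_add hρ₀psd hσpsd
    have hle2 : matSupp σ ≤ matSupp (ρ₀ + σ) := by
      have := psd_matSupp_le_add hσpsd hρ₀psd
      rwa [add_comm] at this
    have hrank : Module.finrank ℂ (matSupp (ρ₀ + σ)) ≤ Module.finrank ℂ (matSupp ρ₀) := by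
      rw [show Module.finrank ℂ (matSupp ρ₀) = sSup ds from hρ₀rank]
      exact le_csSup hbdd ⟨ρ₀ + σ, hτS, rfl⟩
    have heq : matSupp ρ₀ = matSupp (ρ₀ + σ) :=
      Submodule.eq_of_le_of_finrank_le hle hrank
    rw [heq]
    exact hle2
  refine ⟨ρ₀, hρ₀psd, hρ₀fix, le_antisymm ?_ ?_⟩
  · exact le_iSup₂_of_le ρ₀ hρ₀fix le_rfl
  · refine iSup₂_le fun X hX => ?_
    have hXfix : E X = X := hX
    -- Hermitian and anti-Hermitian parts
    set H₁ : Matrix (Fin n) (Fin n) ℂ := (2⁻¹ : ℂ) • (X + Xᴴ) with hH₁def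
    set H₂ : Matrix (Fin n) (Fin n) ℂ := (Complex.I / 2) • (Xᴴ - X) with hH₂def
    have hH₁ : H₁.IsHermitian := by
      show H₁ᴴ = H₁
      rw [hH₁def, Matrix.conjTranspose_smul, Matrix.conjTranspose_add,
        Matrix.conjTranspose_conjTranspose]
      rw [show star (2⁻¹ : ℂ) = (2⁻¹ : ℂ) by simp]
      rw [add_comm]
    have hH₂ : H₂.IsHermitian := by
      show H₂ᴴ = H₂
      rw [hH₂def, Matrix.conjTranspose_smul, Matrix.conjTranspose_sub,
        Matrix.conjTranspose_conjTranspose]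
      rw [show star (Complex.I / 2) = -(Complex.I / 2) by
        simp [div_eq_mul_inv, Complex.star_def]]
      rw [neg_smul, ← smul_neg, neg_sub]
    have hfix1 : E H₁ = H₁ := by
      rw [hH₁def, _root_.map_smul, map_add, cp_conjT E hCP, hXfix]
    have hfix2 : E H₂ = H₂ := by
      rw [hH₂def, _root_.map_smul, map_sub, cp_conjT E hCP, hXfix]
    have hdecomp : X = H₁ + Complex.I • H₂ := by
      rw [hH₁def, hH₂def, smul_smul,
        show Complex.I * (Complex.I / 2) = -(2⁻¹ : ℂ) by
          rw [mul_div_assoc']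
          rw [Complex.I_mul_I]
          norm_num]
      module
    have hsupp : matSupp X ≤ matSupp H₁ ⊔ matSupp H₂ := by
      conv_lhs => rw [hdecomp]
      exact le_trans (matSupp_add_le _ _)
        (sup_le_sup_left (matSupp_smul_le _ _) _)
    obtain ⟨P₁, N₁, hP₁, hN₁, hfP₁, hfN₁, hd₁⟩ := herm_fix_decomp E hCP hTP hH₁ hfix1
    obtain ⟨P₂, N₂, hP₂, hN₂, hfP₂, hfN₂, hd₂⟩ := herm_fix_decomp E hCP hTP hH₂ hfix2
    have h1 : matSupp H₁ ≤ matSupp ρ₀ := by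
      rw [hd₁]
      exact le_trans (matSupp_sub_le _ _)
        (sup_le (key _ hP₁ hfP₁) (key _ hN₁ hfN₁))
    have h2 : matSupp H₂ ≤ matSupp ρ₀ := by
      rw [hd₂]
      exact le_trans (matSupp_sub_le _ _)
        (sup_le (key _ hP₂ hfP₂) (key _ hN₂ hfN₂))
    exact le_trans hsupp (sup_le h1 h2)
end

section
/- Let E be a trace-preserving completely positive map on M_n(ℂ) and λ an eigenvalue of E with |λ| = 1. Then the Jordan blocks of E (as a linear operator on M_n(ℂ)) associated with λ all have size 1; equivalently, ker(E − λI)² = ker(E − λI). -/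
open Matrix
open scoped ComplexOrder

namespace PeriphAux

variable {n : ℕ}

lemma diag_nonneg {P : Matrix (Fin n) (Fin n) ℂ} (hP : P.PosSemidef) (k : Fin n) :
    0 ≤ P k k := by
  have h := hP.dotProduct_mulVec_nonneg (Pi.single k 1)
  have hs : star (Pi.single k (1:ℂ) : Fin n → ℂ) = Pi.single k (1:ℂ) := by
    ext l; simp [Pi.single_apply, apply_ite (star : ℂ → ℂ)]
  rw [hs, Matrix.mulVec_single, single_dotProduct] at h
  simpa using h

lemma quad_nonneg {P : Matrix (Fin n) (Fin n) ℂ} (hP : P.PosSemidef) (i j : Fin n) (c : ℂ) :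
    0 ≤ P i i + c * P i j + P j i * (starRingEnd ℂ) c + c * (P j j * (starRingEnd ℂ) c) := by
  have h := hP.dotProduct_mulVec_nonneg (Pi.single i 1 + Pi.single j c)
  have hs : star ((Pi.single i (1:ℂ) : Fin n → ℂ) + Pi.single j c)
      = (Pi.single i (1:ℂ) : Fin n → ℂ) + Pi.single j (starRingEnd ℂ c) := by
    ext l; simp [Pi.single_apply, apply_ite (star : ℂ → ℂ)]
  rw [Matrix.mulVec_add, Matrix.mulVec_single, Matrix.mulVec_single, hs,
    add_dotProduct, dotProduct_add, dotProduct_add,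
    single_dotProduct, single_dotProduct, single_dotProduct,
    single_dotProduct] at h
  convert h using 1
  simp only [Pi.smul_apply, op_smul_eq_mul, Matrix.col_apply]
  ring

lemma trace_re_eq {P : Matrix (Fin n) (Fin n) ℂ} :
    P.trace.re = ∑ k, (P k k).re := by
  rw [Matrix.trace]; simp [Matrix.diag, Complex.re_sum]

/-- Entry bound for PSD matrices: `|P i j| ≤ re (tr P)`. -/
lemma entry_abs_le_trace {P : Matrix (Fin n) (Fin n) ℂ} (hP : P.PosSemidef) (i j : Fin n) :
    ‖P i j‖ ≤ P.trace.re := by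
  have hdiag : ∀ k, 0 ≤ (P k k).re ∧ (P k k).im = 0 := fun k => by
    have := Complex.nonneg_iff.mp (diag_nonneg hP k); exact ⟨this.1, this.2.symm⟩
  rcases eq_or_ne i j with rfl | hij
  · have habs : ‖P i i‖ = (P i i).re := by
      rw [Complex.norm_def, Complex.normSq_apply, (hdiag i).2]
      rw [mul_zero, add_zero]
      exact Real.sqrt_mul_self (hdiag i).1
    rw [habs, trace_re_eq]
    exact Finset.single_le_sum (fun k _ => (hdiag k).1) (Finset.mem_univ i)
  rcases eq_or_ne (P i j) 0 with h0 | h0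
  · rw [h0, norm_zero, trace_re_eq]
    exact Finset.sum_nonneg fun k _ => (hdiag k).1
  set a : ℝ := ‖P i j‖ with ha
  have ha0 : (a : ℂ) ≠ 0 := by simpa [ha] using h0
  set c : ℂ := -((starRingEnd ℂ) (P i j)) / a with hc
  have h1 : (starRingEnd ℂ) (P i j) * P i j = (a : ℂ) ^ 2 := by
    rw [mul_comm, Complex.mul_conj, Complex.normSq_eq_norm_sq]; push_cast [ha]; ring
  have hcc : c * P i j = -(a : ℂ) := by
    rw [hc, div_mul_eq_mul_div, neg_mul, h1, pow_two]
    field_simp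
  have hji : P j i = (starRingEnd ℂ) (P i j) := by
    have := congrArg star (hP.isHermitian.apply i j)
    simpa [Complex.star_def] using this
  have h2 : P j i * (starRingEnd ℂ) c = -(a : ℂ) := by
    rw [hji, ← _root_.map_mul, mul_comm, hcc]
    simp [Complex.conj_ofReal]
  have hnc : c * (starRingEnd ℂ) c = 1 := by
    rw [hc, map_div₀, map_neg, Complex.conj_conj, Complex.conj_ofReal,
      div_mul_div_comm, neg_mul_neg, h1, ← pow_two]
    exact div_self (pow_ne_zero 2 ha0)
  have h3 : c * (P j j * (starRingEnd ℂ) c) = P j j := by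
    rw [mul_comm (P j j), ← mul_assoc, hnc, one_mul]
  have hq := quad_nonneg hP i j c
  rw [hcc, h2, h3] at hq
  have hre := (Complex.nonneg_iff.mp hq).1
  simp only [Complex.add_re, Complex.neg_re, Complex.ofReal_re] at hre
  rw [trace_re_eq]
  have hsum : (P i i).re + (P j j).re ≤ ∑ k, (P k k).re := by
    have := Finset.sum_le_sum_of_subset_of_nonneg
      (Finset.subset_univ ({i, j} : Finset (Fin n))) (fun k _ _ => (hdiag k).1)
    rwa [Finset.sum_pair hij] at this
  linarith [(hdiag i).1, (hdiag j).1]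

/-- For a Hermitian `H`, the matrix `α·1 − H` is PSD where `α = ∑ |H k l|`. -/
lemma shift_posSemidef {H : Matrix (Fin n) (Fin n) ℂ} (hH : H.IsHermitian) :
    ((((∑ k, ∑ l, ‖H k l‖) : ℝ) : ℂ) • (1 : Matrix (Fin n) (Fin n) ℂ)
      - H).PosSemidef := by
  set α : ℝ := ∑ k, ∑ l, ‖H k l‖ with hα
  refine Matrix.PosSemidef.of_dotProduct_mulVec_nonneg ?_ ?_
  · unfold Matrix.IsHermitian
    rw [Matrix.conjTranspose_sub, Matrix.conjTranspose_smul, Matrix.conjTranspose_one, hH]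
    congr 1
    simp [Complex.star_def, Complex.conj_ofReal]
  · intro x
    set s : ℝ := ∑ k, Complex.normSq (x k) with hs
    have hdots : dotProduct (star x) x = (s : ℂ) := by
      rw [hs]
      push_cast
      simp [dotProduct, Complex.star_def, Complex.normSq_eq_conj_mul_self]
    set q : ℂ := dotProduct (star x) (H *ᵥ x) with hqdef
    have hq : q = ∑ k, ∑ l, (starRingEnd ℂ) (x k) * H k l * x l := by
      rw [hqdef]
      simp [dotProduct, Matrix.mulVec, Finset.mul_sum, mul_assoc, Complex.star_def]
    have hqim : (starRingEnd ℂ) q = q := by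
      rw [hq, map_sum]
      rw [Finset.sum_comm]
      apply Finset.sum_congr rfl; intro k _
      rw [map_sum]
      apply Finset.sum_congr rfl; intro l _
      have hHkl : (starRingEnd ℂ) (H k l) = H l k := by
        have := hH.apply l k
        simpa [Complex.star_def] using this
      simp only [_root_.map_mul, Complex.conj_conj]
      rw [hHkl]
      ring
    have hs0 : 0 ≤ s := Finset.sum_nonneg fun k _ => Complex.normSq_nonneg _
    have hxs : ∀ k, ‖x k‖ ^ 2 ≤ s := fun k => by
      rw [hs, Complex.sq_norm]
      exact Finset.single_le_sum (fun l _ => Complex.normSq_nonneg _) (Finset.mem_univ k)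
    have hqabs : ‖q‖ ≤ α * s := by
      rw [hq]
      calc ‖∑ k, ∑ l, (starRingEnd ℂ) (x k) * H k l * x l‖
          ≤ ∑ k, ∑ l, ‖(starRingEnd ℂ) (x k) * H k l * x l‖ := by
            refine (norm_sum_le _ _).trans ?_
            exact Finset.sum_le_sum fun k _ => norm_sum_le _ _
        _ ≤ ∑ k, ∑ l, ‖H k l‖ * s := by
            refine Finset.sum_le_sum fun k _ => Finset.sum_le_sum fun l _ => ?_
            rw [norm_mul, norm_mul, Complex.norm_conj]
            have h1 := hxs k
            have h2 := hxs l
            have := norm_nonneg (H k l)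
            nlinarith [norm_nonneg (x k), norm_nonneg (x l),
              sq_nonneg (‖x k‖ - ‖x l‖)]
        _ = α * s := by rw [hα, Finset.sum_mul]; simp [Finset.sum_mul]
    have him : q.im = 0 := by
      have := congrArg Complex.im hqim
      simp only [Complex.conj_im] at this
      linarith
    have hre : q.re ≤ ‖q‖ := Complex.re_le_norm q
    rw [Matrix.sub_mulVec, dotProduct_sub, Matrix.smul_mulVec,
      Matrix.one_mulVec, dotProduct_smul, hdots, ← hqdef, smul_eq_mul]
    rw [Complex.nonneg_iff]
    constructor
    · simp only [smul_eq_mul, Complex.sub_re, Complex.mul_re, Complex.ofReal_re,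
        Complex.ofReal_im, mul_zero, zero_mul, sub_zero]
      linarith
    · simp [smul_eq_mul, Complex.sub_im, Complex.mul_im, him]

lemma cp_psd {E : Matrix (Fin n) (Fin n) ℂ → Matrix (Fin n) (Fin n) ℂ}
    (hCP : CompletelyPositive E) {P : Matrix (Fin n) (Fin n) ℂ} (hP : P.PosSemidef) :
    (E P).PosSemidef := by
  obtain ⟨k, K, hK⟩ := hCP
  rw [hK]
  refine Finset.sum_induction _ _ (fun A B hA hB => hA.add hB) Matrix.PosSemidef.zero ?_
  exact fun i _ => hP.mul_mul_conjTranspose_same (K i)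

lemma pow_psd (E : Module.End ℂ (Matrix (Fin n) (Fin n) ℂ)) (hCP : CompletelyPositive ⇑E)
    (m : ℕ) : ∀ (P : Matrix (Fin n) (Fin n) ℂ), P.PosSemidef → ((E^m) P).PosSemidef := by
  induction m with
  | zero => intro P hP; simpa using hP
  | succ m ih =>
    intro P hP
    rw [pow_succ, Module.End.mul_apply]
    exact ih _ (cp_psd hCP hP)

lemma pow_trace (E : Module.End ℂ (Matrix (Fin n) (Fin n) ℂ)) (hTP : TracePreserving ⇑E)
    (m : ℕ) (P : Matrix (Fin n) (Fin n) ℂ) : ((E^m) P).trace = P.trace := by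
  induction m generalizing P with
  | zero => simp
  | succ m ih =>
    rw [pow_succ, Module.End.mul_apply, ih (E P), hTP P]

/-- Trajectories of a CPTP map have uniformly bounded matrix entries. -/
lemma exists_bound (E : Module.End ℂ (Matrix (Fin n) (Fin n) ℂ))
    (hCP : CompletelyPositive ⇑E) (hTP : TracePreserving ⇑E)
    (Y : Matrix (Fin n) (Fin n) ℂ) :
    ∃ C : ℝ, ∀ (m : ℕ) (i j : Fin n), ‖((E^m) Y) i j‖ ≤ C := by
  set H₁ : Matrix (Fin n) (Fin n) ℂ := (1/2 : ℂ) • (Y + Yᴴ) with hH₁def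
  set H₂ : Matrix (Fin n) (Fin n) ℂ := (Complex.I/2) • (Yᴴ - Y) with hH₂def
  have hH₁ : H₁.IsHermitian := by
    unfold Matrix.IsHermitian
    rw [hH₁def, Matrix.conjTranspose_smul, Matrix.conjTranspose_add,
      Matrix.conjTranspose_conjTranspose]
    congr 1
    · simp [Complex.star_def]
    · abel
  have hH₂ : H₂.IsHermitian := by
    unfold Matrix.IsHermitian
    rw [hH₂def, Matrix.conjTranspose_smul, Matrix.conjTranspose_sub,
      Matrix.conjTranspose_conjTranspose]
    rw [show star (Complex.I/2) = -(Complex.I/2) by simp [Complex.star_def]; ring]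
    rw [neg_smul, ← smul_neg]
    congr 1
    abel
  set α₁ : ℝ := ∑ k, ∑ l, ‖H₁ k l‖ with hα₁
  set α₂ : ℝ := ∑ k, ∑ l, ‖H₂ k l‖ with hα₂
  set P₁ : Matrix (Fin n) (Fin n) ℂ := (α₁ : ℂ) • 1 - H₁ with hP₁def
  set P₂ : Matrix (Fin n) (Fin n) ℂ := (α₂ : ℂ) • 1 - H₂ with hP₂def
  have hP₁ : P₁.PosSemidef := shift_posSemidef hH₁
  have hP₂ : P₂.PosSemidef := shift_posSemidef hH₂
  have hsum : H₁ + Complex.I • H₂ = Y := by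
    rw [hH₁def, hH₂def]
    ext i j
    simp only [Matrix.add_apply, Matrix.smul_apply, Matrix.sub_apply,
      Matrix.conjTranspose_apply, smul_eq_mul]
    have hI : Complex.I * Complex.I = -1 := Complex.I_mul_I
    linear_combination ((star (Y j i) - Y i j)/2) * hI
  have hY : Y = (α₁ : ℂ) • (1 : Matrix (Fin n) (Fin n) ℂ) - P₁
      + Complex.I • ((α₂ : ℂ) • (1 : Matrix (Fin n) (Fin n) ℂ) - P₂) := by
    rw [hP₁def, hP₂def, sub_sub_cancel, sub_sub_cancel, hsum]
  set t0 : ℝ := (1 : Matrix (Fin n) (Fin n) ℂ).trace.re with ht0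
  refine ⟨|α₁| * t0 + P₁.trace.re + (|α₂| * t0 + P₂.trace.re), fun m i j => ?_⟩
  have hone : ‖((E^m) (1 : Matrix (Fin n) (Fin n) ℂ)) i j‖ ≤ t0 := by
    have h := entry_abs_le_trace (pow_psd E hCP m _ Matrix.PosSemidef.one) i j
    rwa [pow_trace E hTP] at h
  have hp1 : ‖((E^m) P₁) i j‖ ≤ P₁.trace.re := by
    have h := entry_abs_le_trace (pow_psd E hCP m _ hP₁) i j
    rwa [pow_trace E hTP] at h
  have hp2 : ‖((E^m) P₂) i j‖ ≤ P₂.trace.re := by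
    have h := entry_abs_le_trace (pow_psd E hCP m _ hP₂) i j
    rwa [pow_trace E hTP] at h
  have hEm : (E^m) Y = (α₁ : ℂ) • ((E^m) (1 : Matrix (Fin n) (Fin n) ℂ)) - (E^m) P₁
      + Complex.I • ((α₂ : ℂ) • ((E^m) (1 : Matrix (Fin n) (Fin n) ℂ)) - (E^m) P₂) := by
    conv_lhs => rw [hY]
    simp [map_add, map_sub, _root_.map_smul]
  rw [hEm]
  simp only [Matrix.add_apply, Matrix.sub_apply, Matrix.smul_apply, smul_eq_mul]
  have tri : ∀ a b : ℂ, ‖a - b‖ ≤ ‖a‖ + ‖b‖ := fun a b => by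
    simpa [sub_eq_add_neg] using norm_add_le a (-b)
  calc ‖(α₁ : ℂ) * ((E^m) 1) i j - ((E^m) P₁) i j
        + Complex.I * ((α₂ : ℂ) * ((E^m) 1) i j - ((E^m) P₂) i j)‖
      ≤ ‖(α₁ : ℂ) * ((E^m) 1) i j - ((E^m) P₁) i j‖
        + ‖Complex.I * ((α₂ : ℂ) * ((E^m) 1) i j - ((E^m) P₂) i j)‖ :=
        norm_add_le _ _
    _ ≤ (|α₁| * t0 + P₁.trace.re) + (|α₂| * t0 + P₂.trace.re) := by
        rw [norm_mul, Complex.norm_I, one_mul]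
        have h1 := tri ((α₁ : ℂ) * ((E^m) 1) i j) (((E^m) P₁) i j)
        have h2 := tri ((α₂ : ℂ) * ((E^m) 1) i j) (((E^m) P₂) i j)
        rw [norm_mul, Complex.norm_real, Real.norm_eq_abs] at h1 h2
        have hone' := hone
        have e1 : |α₁| * ‖((E^m) (1:Matrix (Fin n) (Fin n) ℂ)) i j‖ ≤ |α₁| * t0 :=
          mul_le_mul_of_nonneg_left hone (abs_nonneg _)
        have e2 : |α₂| * ‖((E^m) (1:Matrix (Fin n) (Fin n) ℂ)) i j‖ ≤ |α₂| * t0 :=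
          mul_le_mul_of_nonneg_left hone (abs_nonneg _)
        linarith
    _ = |α₁| * t0 + P₁.trace.re + (|α₂| * t0 + P₂.trace.re) := by ring

end PeriphAux

open PeriphAux in
/-- For a CPTP map `E`, Jordan blocks associated with a unimodular eigenvalue
`λ` are all of size 1: `ker (E − λ·1)² = ker (E − λ·1)`. -/
theorem peripheral_spectrum_no_jordan_blocks {n : ℕ}
    (E : Module.End ℂ (Matrix (Fin n) (Fin n) ℂ))
    (hCP : CompletelyPositive (⇑E)) (hTP : TracePreserving (⇑E))
    (lam : ℂ) (hEig : Module.End.HasEigenvalue E lam) (hlam : ‖lam‖ = 1) :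
    LinearMap.ker ((E - lam • (1 : Module.End ℂ (Matrix (Fin n) (Fin n) ℂ))) ^ 2) =
      LinearMap.ker (E - lam • (1 : Module.End ℂ (Matrix (Fin n) (Fin n) ℂ))) := by
  set F := E - lam • (1 : Module.End ℂ (Matrix (Fin n) (Fin n) ℂ)) with hFdef
  have hlam' : ‖lam‖ = 1 := by exact hlam
  apply le_antisymm
  · intro Y hY
    rw [LinearMap.mem_ker, sq, Module.End.mul_apply] at hY
    rw [LinearMap.mem_ker]
    set X := F Y with hXdef
    -- goal : F Y = 0, i.e. X = 0
    have hFX : E X = lam • X := by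
      have h0 : E X - lam • X = 0 := by
        have hfx : F X = 0 := hY
        simpa [hFdef, LinearMap.sub_apply, LinearMap.smul_apply, Module.End.one_apply]
          using hfx
      exact sub_eq_zero.mp h0
    have hEY : E Y = lam • Y + X := by
      have hX' : X = E Y - lam • Y := by
        simp [hXdef, hFdef, LinearMap.sub_apply, LinearMap.smul_apply, Module.End.one_apply]
      rw [hX']; abel
    have key : ∀ m : ℕ, (E^(m+1)) Y = (lam^(m+1)) • Y + (((m:ℂ)+1) * lam^m) • X := by
      intro m
      induction m with
      | zero => simpa using hEY
      | succ m ih =>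
        rw [pow_succ', Module.End.mul_apply, ih, map_add, _root_.map_smul, _root_.map_smul,
          hEY, hFX]
        push_cast
        module
    obtain ⟨C, hC⟩ := exists_bound E hCP hTP Y
    have hX0 : X = 0 := by
      by_contra hne
      have hex : ∃ i j, X i j ≠ 0 := by
        by_contra h
        push_neg at h
        exact hne (by ext i j; exact h i j)
      obtain ⟨i, j, hij⟩ := hex
      set a : ℝ := ‖X i j‖ with ha
      have ha0 : 0 < a := by rw [ha]; exact norm_pos_iff.mpr hij
      obtain ⟨m, hm⟩ := exists_nat_gt ((C + ‖Y i j‖) / a)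
      have h1 := hC (m+1) i j
      rw [key m] at h1
      have hentry : (((lam^(m+1)) • Y + (((m:ℂ)+1) * lam^m) • X)) i j
          = lam^(m+1) * Y i j + (((m:ℂ)+1) * lam^m) * X i j := by
        simp [Matrix.add_apply, Matrix.smul_apply, smul_eq_mul]
      rw [hentry] at h1
      have habs2 : ‖(((m:ℂ)+1) * lam^m) * X i j‖ = ((m:ℝ)+1) * a := by
        rw [norm_mul, norm_mul, norm_pow, hlam', one_pow, mul_one,
          ← ha]
        congr 1
        have hcast : ((m:ℂ)+1) = ((m+1 : ℕ) : ℂ) := by push_cast; ring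
        rw [hcast, Complex.norm_natCast]
        push_cast; ring
      have habs1 : ‖lam^(m+1) * Y i j‖ = ‖Y i j‖ := by
        rw [norm_mul, norm_pow, hlam', one_pow, one_mul]
      have hlow : ((m:ℝ)+1) * a - ‖Y i j‖
          ≤ ‖lam^(m+1) * Y i j + (((m:ℂ)+1) * lam^m) * X i j‖ := by
        have h' := norm_add_le
          (lam^(m+1) * Y i j + (((m:ℂ)+1) * lam^m) * X i j) (-(lam^(m+1) * Y i j))
        rw [show lam^(m+1) * Y i j + (((m:ℂ)+1) * lam^m) * X i j + -(lam^(m+1) * Y i j)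
            = (((m:ℂ)+1) * lam^m) * X i j by ring, norm_neg, habs1, habs2] at h'
        linarith
      have h2 : C + ‖Y i j‖ < (m:ℝ) * a := (div_lt_iff₀ ha0).mp hm
      nlinarith
    exact hX0
  · intro Y hY
    rw [LinearMap.mem_ker] at hY
    rw [LinearMap.mem_ker, sq, Module.End.mul_apply, hY, map_zero]
end

section
/- Let E be a unital trace-preserving completely positive map on M_n(ℂ) (E(1) = 1). If a projective measurement {P₁,…,P_m} (orthogonal projections summing to 1) is unconditionally preserved, i.e., there exist operators Q_k ≥ 0 with Σ_k Q_k = 1 and Tr(P_k ρ) = Tr(Q_k E(ρ)) for all density matrices ρ, then P_k = E†(Q_k) for all k, and each P_k is a fixed point of E† ∘ E. -/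
open Matrix
open scoped ComplexOrder

section AuxLemmas
open Matrix
open scoped ComplexOrder
open scoped MatrixOrder
variable {n : ℕ}

lemma aux_trace_cts_zero {A : Matrix (Fin n) (Fin n) ℂ}
    (h : (Aᴴ * A).trace = 0) : A = 0 := by
  have hsum : ∑ j, dotProduct (star fun i => A i j) (fun i => A i j) = 0 := by
    rw [← h]
    simp [Matrix.trace, Matrix.mul_apply, dotProduct, Matrix.conjTranspose_apply, Matrix.diag]
  have hz := (Finset.sum_eq_zero_iff_of_nonneg
    (fun j _ => dotProduct_star_self_nonneg (fun i => A i j))).mp hsum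
  ext i j
  exact congrFun (dotProduct_star_self_eq_zero.mp (hz j (Finset.mem_univ j))) i

lemma aux_psd_trace_nonneg {A : Matrix (Fin n) (Fin n) ℂ} (hA : A.PosSemidef) :
    0 ≤ A.trace := by
  rw [Matrix.trace]
  apply Finset.sum_nonneg
  intro i _
  have := hA.dotProduct_mulVec_nonneg (Pi.single i 1)
  simpa [Matrix.mulVec_single, dotProduct, Pi.single_apply, Matrix.diag] using this

lemma aux_psd_trace_zero {A : Matrix (Fin n) (Fin n) ℂ} (hA : A.PosSemidef)
    (h : A.trace = 0) : A = 0 := by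
  have hs : CFC.sqrt A * CFC.sqrt A = A := CFC.sqrt_mul_sqrt_self A hA.nonneg
  have hherm : (CFC.sqrt A)ᴴ = CFC.sqrt A := (CFC.sqrt_nonneg A).posSemidef.isHermitian
  have : CFC.sqrt A = 0 := by
    apply aux_trace_cts_zero
    rw [hherm, hs, h]
  rw [← hs, this, mul_zero]

lemma aux_psd_mul_trace_zero {A B : Matrix (Fin n) (Fin n) ℂ}
    (hA : A.PosSemidef) (hB : B.PosSemidef) (h : (A * B).trace = 0) : A * B = 0 := by
  have hsA : CFC.sqrt A * CFC.sqrt A = A := CFC.sqrt_mul_sqrt_self A hA.nonneg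
  have hsB : CFC.sqrt B * CFC.sqrt B = B := CFC.sqrt_mul_sqrt_self B hB.nonneg
  have hhA : (CFC.sqrt A)ᴴ = CFC.sqrt A := (CFC.sqrt_nonneg A).posSemidef.isHermitian
  have hhB : (CFC.sqrt B)ᴴ = CFC.sqrt B := (CFC.sqrt_nonneg B).posSemidef.isHermitian
  have key : CFC.sqrt A * CFC.sqrt B = 0 := by
    apply aux_trace_cts_zero
    have e0 : ((CFC.sqrt A * CFC.sqrt B)ᴴ * (CFC.sqrt A * CFC.sqrt B)).trace = (A * B).trace := by
      rw [conjTranspose_mul, hhA, hhB]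
      have e1 : CFC.sqrt B * CFC.sqrt A * (CFC.sqrt A * CFC.sqrt B) = CFC.sqrt B * (A * CFC.sqrt B) := by
        rw [Matrix.mul_assoc, ← Matrix.mul_assoc (CFC.sqrt A), hsA]
      rw [e1, Matrix.trace_mul_comm, Matrix.mul_assoc, hsB]
    rw [e0, h]
  have e2 : CFC.sqrt A * (CFC.sqrt A * CFC.sqrt B) * CFC.sqrt B = A * B := by
    rw [← Matrix.mul_assoc, hsA, Matrix.mul_assoc, hsB]
  rw [← e2, key, mul_zero, zero_mul]

lemma aux_psd_sum {ι : Type*} (s : Finset ι) (f : ι → Matrix (Fin n) (Fin n) ℂ)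
    (hf : ∀ i ∈ s, (f i).PosSemidef) : (∑ i ∈ s, f i).PosSemidef := by
  classical
  induction s using Finset.induction with
  | empty => simpa using Matrix.PosSemidef.zero
  | insert _ _ hx ih =>
    rw [Finset.sum_insert hx]
    exact ((hf _ (Finset.mem_insert_self _ _)).add
      (ih fun i hi => hf i (Finset.mem_insert_of_mem hi)))

lemma aux_psd_sum_eq_zero {ι : Type*} {s : Finset ι} {f : ι → Matrix (Fin n) (Fin n) ℂ}
    (hf : ∀ i ∈ s, (f i).PosSemidef) (h : ∑ i ∈ s, f i = 0) :
    ∀ i ∈ s, f i = 0 := by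
  have htr : ∑ i ∈ s, (f i).trace = 0 := by
    rw [← Matrix.trace_sum, h, Matrix.trace_zero]
  have := (Finset.sum_eq_zero_iff_of_nonneg
    (fun i hi => aux_psd_trace_nonneg (hf i hi))).mp htr
  intro i hi
  exact aux_psd_trace_zero (hf i hi) (this i hi)

lemma aux_psd_smul {c : ℂ} (hc : 0 ≤ c) {A : Matrix (Fin n) (Fin n) ℂ}
    (hA : A.PosSemidef) : (c • A).PosSemidef := by
  have hcc : (starRingEnd ℂ) c = c := by
    rw [Complex.conj_eq_iff_im]
    exact ((Complex.nonneg_iff).mp hc).2.symm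
  apply Matrix.PosSemidef.of_dotProduct_mulVec_nonneg
  · unfold Matrix.IsHermitian
    rw [conjTranspose_smul, hA.isHermitian]
    simp [hcc]
  · intro x
    rw [Matrix.smul_mulVec, dotProduct_smul]
    exact mul_nonneg hc (hA.dotProduct_mulVec_nonneg x)

lemma aux_rank_one_psd (v : Fin n → ℂ) :
    (Matrix.of (fun i j => v i * star (v j))).PosSemidef := by
  apply Matrix.PosSemidef.of_dotProduct_mulVec_nonneg
  · ext i j
    simp [Matrix.conjTranspose_apply, mul_comm]
  · intro x
    have : dotProduct (star x) ((Matrix.of fun i j => v i * star (v j)) *ᵥ x)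
        = star (dotProduct (star v) x) * (dotProduct (star v) x) := by
      simp only [dotProduct, Matrix.mulVec, Matrix.of_apply, Pi.star_apply,
        star_sum, star_mul', star_star, Finset.mul_sum, Finset.sum_mul]
      rw [Finset.sum_comm]
      apply Finset.sum_congr rfl; intro i _
      apply Finset.sum_congr rfl; intro j _
      ring
    rw [this]
    exact star_mul_self_nonneg _

lemma aux_rank_one_trace (D : Matrix (Fin n) (Fin n) ℂ) (v : Fin n → ℂ) :
    (D * Matrix.of (fun i j => v i * star (v j))).trace
      = dotProduct (star v) (D *ᵥ v) := by
  simp only [Matrix.trace, Matrix.diag, Matrix.mul_apply, Matrix.of_apply,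
    dotProduct, Matrix.mulVec, Pi.star_apply, Finset.mul_sum]
  apply Finset.sum_congr rfl; intro i _
  apply Finset.sum_congr rfl; intro j _
  ring

end AuxLemmas

/-- For a unital CPTP map `E` with Hilbert–Schmidt adjoint `E'`, if a projective
measurement `{P k}` is unconditionally preserved — i.e. there are POVM elements
`Q k ≥ 0` with `Σ Q k = 1` and `Tr(P k ρ) = Tr(Q k E(ρ))` for all density
matrices `ρ` — then `P k = E'(Q k)` and each `P k` is a fixed point of
`E' ∘ E`. -/
theorem unconditionally_preserved_measurement {n m : ℕ}
    (E E' : Module.End ℂ (Matrix (Fin n) (Fin n) ℂ))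
    (hCP : CompletelyPositive (⇑E)) (hTP : TracePreserving (⇑E))
    (hU : E 1 = 1)
    (hadj : ∀ A B : Matrix (Fin n) (Fin n) ℂ,
      (Aᴴ * E B).trace = ((E' A)ᴴ * B).trace)
    (P Q : Fin m → Matrix (Fin n) (Fin n) ℂ)
    (hPproj : ∀ k, (P k)ᴴ = P k ∧ P k * P k = P k)
    (hPsum : ∑ k, P k = 1)
    (hQpos : ∀ k, (Q k).PosSemidef)
    (hQsum : ∑ k, Q k = 1)
    (hpres : ∀ k, ∀ ρ : Matrix (Fin n) (Fin n) ℂ,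
      ρ.PosSemidef → ρ.trace = 1 → (P k * ρ).trace = (Q k * E ρ).trace) :
    ∀ k, P k = E' (Q k) ∧ E' (E (P k)) = P k := by
  classical
  obtain ⟨κ, K, hK⟩ := hCP
  -- the adjoint has the conjugate Kraus form
  have hEt : ∀ A B : Matrix (Fin n) (Fin n) ℂ,
      (Aᴴ * E B).trace = ((∑ i, (K i)ᴴ * A * K i)ᴴ * B).trace := by
    intro A B
    rw [hK, Matrix.mul_sum, Matrix.trace_sum, conjTranspose_sum, Matrix.sum_mul,
      Matrix.trace_sum]
    apply Finset.sum_congr rfl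
    intro i _
    rw [conjTranspose_mul, conjTranspose_mul, conjTranspose_conjTranspose]
    have e : Aᴴ * (K i * B * (K i)ᴴ) = Aᴴ * K i * B * (K i)ᴴ := by
      simp only [Matrix.mul_assoc]
    rw [e, Matrix.trace_mul_comm]
    simp only [Matrix.mul_assoc]
  have hE'eq : ∀ A, E' A = ∑ i, (K i)ᴴ * A * K i := by
    intro A
    have h0 : ∀ B, ((E' A - ∑ i, (K i)ᴴ * A * K i)ᴴ * B).trace = 0 := by
      intro B
      rw [conjTranspose_sub, Matrix.sub_mul, Matrix.trace_sub, ← hadj A B, hEt A B, sub_self]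
    exact sub_eq_zero.mp (aux_trace_cts_zero (h0 _))
  -- E maps PSD to PSD
  have hEpsd : ∀ X : Matrix (Fin n) (Fin n) ℂ, X.PosSemidef → (E X).PosSemidef := by
    intro X hX
    rw [hK]
    exact aux_psd_sum _ _ (fun i _ => hX.mul_mul_conjTranspose_same (K i))
  have hPpsd : ∀ k, (P k).PosSemidef := by
    intro k
    have h := posSemidef_conjTranspose_mul_self (P k)
    rwa [(hPproj k).1, (hPproj k).2] at h
  -- linearized preservation on PSD matrices
  have hlin : ∀ k, ∀ X : Matrix (Fin n) (Fin n) ℂ, X.PosSemidef →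
      (P k * X).trace = (Q k * E X).trace := by
    intro k X hX
    by_cases h0 : X.trace = 0
    · rw [aux_psd_trace_zero hX h0]
      simp [map_zero]
    · have hnn := aux_psd_trace_nonneg hX
      obtain ⟨hre, him⟩ := Complex.nonneg_iff.mp hnn
      have hXtr : X.trace = ((X.trace.re : ℝ) : ℂ) := Complex.ext rfl him.symm
      have hinv : 0 ≤ (X.trace)⁻¹ := by
        rw [hXtr, ← Complex.ofReal_inv]
        rw [Complex.nonneg_iff]
        constructor
        · simpa using inv_nonneg.mpr hre
        · simp
      have hρ := aux_psd_smul hinv hX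
      have htr : ((X.trace)⁻¹ • X).trace = 1 := by
        rw [Matrix.trace_smul, smul_eq_mul, inv_mul_cancel₀ h0]
      have hp := hpres k _ hρ htr
      rw [Matrix.mul_smul, Matrix.trace_smul, _root_.map_smul, Matrix.mul_smul,
        Matrix.trace_smul, smul_eq_mul, smul_eq_mul] at hp
      exact mul_left_cancel₀ (inv_ne_zero h0) hp
  -- orthogonality of the projections
  have hPmul : ∀ j k : Fin m, j ≠ k → P j * P k = 0 := by
    intro j k hjk
    have hsum : ∑ l, P k * P l * P k = P k := by
      rw [← Finset.sum_mul, ← Matrix.mul_sum, hPsum, mul_one, (hPproj k).2]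
    have hrepr : ∀ l, P k * P l * P k = (P l * P k)ᴴ * (P l * P k) := by
      intro l
      rw [conjTranspose_mul, (hPproj l).1, (hPproj k).1]
      have e : P k * P l * (P l * P k) = P k * (P l * P l) * P k := by
        simp only [Matrix.mul_assoc]
      rw [e, (hPproj l).2]
    have hsplit : P k * P k * P k + ∑ l ∈ Finset.univ.erase k, P k * P l * P k = P k := by
      rw [Finset.add_sum_erase _ (fun l => P k * P l * P k) (Finset.mem_univ k)]
      exact hsum
    have hkkk : P k * P k * P k = P k := by rw [(hPproj k).2, (hPproj k).2]
    rw [hkkk] at hsplit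
    have hzero : ∑ l ∈ Finset.univ.erase k, P k * P l * P k = 0 :=
      (add_eq_left).mp hsplit
    have hterm := aux_psd_sum_eq_zero
      (fun l _ => by rw [hrepr l]; exact posSemidef_conjTranspose_mul_self _)
      hzero j (Finset.mem_erase.mpr ⟨hjk, Finset.mem_univ j⟩)
    rw [hrepr j] at hterm
    exact conjTranspose_mul_self_eq_zero.mp hterm
  have hEP1 : ∑ j, E (P j) = 1 := by rw [← map_sum, hPsum, hU]
  intro k
  -- Part 1 : P k = E' (Q k)
  have hQherm : (Q k)ᴴ = Q k := (hQpos k).isHermitian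
  have hE'herm : (E' (Q k))ᴴ = E' (Q k) := by
    rw [hE'eq, conjTranspose_sum]
    apply Finset.sum_congr rfl
    intro i _
    rw [conjTranspose_mul, conjTranspose_mul, conjTranspose_conjTranspose, hQherm]
    simp only [Matrix.mul_assoc]
  have hDdot : ∀ v, dotProduct (star v) ((E' (Q k) - P k) *ᵥ v) = 0 := by
    intro v
    set X := Matrix.of (fun i j => v i * star (v j)) with hXdef
    have hXpsd := aux_rank_one_psd v
    have h2 : (E' (Q k) * X).trace = (P k * X).trace := by
      have h3 := hadj (Q k) X
      rw [hQherm, hE'herm] at h3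
      rw [← h3, ← hlin k X hXpsd]
    have h1 : ((E' (Q k) - P k) * X).trace = 0 := by
      rw [Matrix.sub_mul, Matrix.trace_sub, h2, sub_self]
    rw [← aux_rank_one_trace]
    exact h1
  have hDherm : (E' (Q k) - P k)ᴴ = E' (Q k) - P k := by
    rw [conjTranspose_sub, hE'herm, (hPproj k).1]
  have hD0 : E' (Q k) - P k = 0 := by
    have hpsd : (E' (Q k) - P k).PosSemidef := Matrix.PosSemidef.of_dotProduct_mulVec_nonneg hDherm fun x => le_of_eq (hDdot x).symm
    apply aux_psd_trace_zero hpsd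
    rw [Matrix.trace]
    apply Finset.sum_eq_zero
    intro i _
    have := hDdot (Pi.single i 1)
    simpa [Matrix.mulVec_single, dotProduct, Pi.single_apply, Matrix.diag] using this
  have hPart1 : P k = E' (Q k) := (sub_eq_zero.mp hD0).symm
  -- Part 2 : Q k = E (P k)
  have hqj : ∀ j, j ≠ k → Q k * E (P j) = 0 := by
    intro j hjk
    apply aux_psd_mul_trace_zero (hQpos k) (hEpsd _ (hPpsd j))
    rw [← hlin k (P j) (hPpsd j), hPmul k j (Ne.symm hjk), Matrix.trace_zero]
  have hqk : Q k * E (P k) = E (P k) := by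
    have hRpsd : ((1 : Matrix (Fin n) (Fin n) ℂ) - Q k).PosSemidef := by
      have e : (1 : Matrix (Fin n) (Fin n) ℂ) - Q k = ∑ j ∈ Finset.univ.erase k, Q j := by
        rw [← hQsum, ← Finset.add_sum_erase _ Q (Finset.mem_univ k)]
        rw [add_sub_cancel_left]
      rw [e]
      exact aux_psd_sum _ _ (fun j _ => hQpos j)
    have hR : ((1 : Matrix (Fin n) (Fin n) ℂ) - Q k) * E (P k) = 0 := by
      apply aux_psd_mul_trace_zero hRpsd (hEpsd _ (hPpsd k))
      rw [Matrix.sub_mul, Matrix.trace_sub, Matrix.one_mul, hTP (P k),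
        ← hlin k (P k) (hPpsd k), (hPproj k).2, sub_self]
    rw [Matrix.sub_mul, Matrix.one_mul, sub_eq_zero] at hR
    exact hR.symm
  have hQEP : Q k = E (P k) := by
    calc Q k = Q k * 1 := (mul_one _).symm
      _ = Q k * ∑ j, E (P j) := by rw [hEP1]
      _ = ∑ j, Q k * E (P j) := Matrix.mul_sum _ _ _
      _ = Q k * E (P k) := Finset.sum_eq_single k
          (fun j _ hj => hqj j hj) (fun h => absurd (Finset.mem_univ k) h)
      _ = E (P k) := hqk
  refine ⟨hPart1, ?_⟩
  rw [← hQEP]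
  exact hPart1.symm
end
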